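/- The partial products ∏_{n=0}^{N} [((4n+3)(2n+2)) / ((4n+5)(2n+3))]^{u_n} converge as N → ∞ to 1/√2, and the partial products ∏_{n=0}^{N} [((2n+2)(n+1)) / ((2n+3)(n+2))]^{u_n} also converge as N → ∞ to 1/√2. -/

import Mathlib

open Filter Finset Topology

/-- The Thue–Morse sequence with values `±1`: `u n = (-1)^(s₂ n)` where `s₂ n`
is the sum of the binary digits of `n`. -/
def u (n : ℕ) : ℤ := (-1) ^ (Nat.digits 2 n).sum

lemma u_zero : u 0 = 1 := by simp [u]

lemma u_double (k : ℕ) : u (2 * k) = u k := by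
  rcases Nat.eq_zero_or_pos k with h | h
  · simp [h]
  · unfold u
    rw [Nat.digits_def' (by norm_num : 1 < 2) (by omega : 0 < 2 * k)]
    simp [Nat.mul_div_cancel_left k (by norm_num : 0 < 2), Nat.mul_mod_right]

lemma u_succ_double (k : ℕ) : u (2 * k + 1) = -u k := by
  unfold u
  rw [Nat.digits_def' (by norm_num : 1 < 2) (by omega : 0 < 2 * k + 1)]
  have h1 : (2 * k + 1) % 2 = 1 := by omega
  have h2 : (2 * k + 1) / 2 = k := by omega
  rw [h1, h2]
  simp [pow_add, pow_succ]

lemma abs_u (n : ℕ) : |(u n : ℝ)| = 1 := by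
  unfold u
  push_cast
  rw [abs_pow, abs_neg, abs_one, one_pow]

noncomputable def psl (m : ℕ) : ℝ := Real.log m - Real.log ((m : ℝ) + 1)

noncomputable def S (g : ℕ → ℝ) (M : ℕ) : ℝ := ∑ n ∈ Finset.range M, (u n : ℝ) * g n

lemma S_split (g : ℕ → ℝ) (M : ℕ) :
    S g (2 * M) = ∑ k ∈ Finset.range M, (u k : ℝ) * (g (2 * k) - g (2 * k + 1)) := by
  induction M with
  | zero => simp [S]
  | succ M ih =>
    have h2 : 2 * (M + 1) = 2 * M + 1 + 1 := by ring
    have e1 : S g (2 * (M + 1))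
        = S g (2 * M) + (u (2 * M) : ℝ) * g (2 * M) + (u (2 * M + 1) : ℝ) * g (2 * M + 1) := by
      simp only [S, h2, Finset.sum_range_succ]
    rw [Finset.sum_range_succ, ← ih, e1, u_double, u_succ_double]
    push_cast
    ring

lemma tendsto_two_mul : Tendsto (fun M : ℕ => 2 * M) atTop atTop :=
  tendsto_atTop_mono (fun n => by simp; omega) tendsto_id

lemma tendsto_of_even_odd {f : ℕ → ℝ} {L : ℝ}
    (he : Tendsto (fun M => f (2 * M)) atTop (𝓝 L))
    (ho : Tendsto (fun M => f (2 * M + 1)) atTop (𝓝 L)) :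
    Tendsto f atTop (𝓝 L) := by
  rw [Metric.tendsto_atTop] at he ho ⊢
  intro ε hε
  obtain ⟨N₁, h₁⟩ := he ε hε
  obtain ⟨N₂, h₂⟩ := ho ε hε
  refine ⟨2 * N₁ + 2 * N₂ + 2, fun M hM => ?_⟩
  rcases Nat.even_or_odd M with ⟨k, hk⟩ | ⟨k, hk⟩
  · have hMk : M = 2 * k := by omega
    rw [hMk]; exact h₁ k (by omega)
  · have hMk : M = 2 * k + 1 := by omega
    rw [hMk]; exact h₂ k (by omega)

lemma conv {g : ℕ → ℝ} (h0 : Tendsto (fun n => |g n|) atTop (𝓝 0))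
    (hs : Summable fun k => |g (2 * k) - g (2 * k + 1)|) :
    ∃ L, Tendsto (S g) atTop (𝓝 L) := by
  set h : ℕ → ℝ := fun k => (u k : ℝ) * (g (2 * k) - g (2 * k + 1)) with hh
  have habs : ∀ k, |h k| = |g (2 * k) - g (2 * k + 1)| := by
    intro k; rw [hh]; simp [abs_mul, abs_u]
  have hsum : Summable h := by
    refine Summable.of_abs ?_
    exact hs.congr fun k => (habs k).symm
  refine ⟨∑' k, h k, ?_⟩
  have heven : Tendsto (fun M => S g (2 * M)) atTop (𝓝 (∑' k, h k)) := by
    have ht := hsum.hasSum.tendsto_sum_nat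
    refine ht.congr fun M => ?_
    rw [S_split]
  have hz : Tendsto (fun M => (u (2 * M) : ℝ) * g (2 * M)) atTop (𝓝 0) := by
    rw [tendsto_zero_iff_abs_tendsto_zero]
    have he : (abs ∘ fun M => (u (2 * M) : ℝ) * g (2 * M)) = fun M => |g (2 * M)| := by
      funext M; simp [abs_mul, abs_u]
    rw [he]
    exact h0.comp tendsto_two_mul
  have hodd : Tendsto (fun M => S g (2 * M + 1)) atTop (𝓝 (∑' k, h k)) := by
    have : (fun M => S g (2 * M + 1))
        = fun M => S g (2 * M) + (u (2 * M) : ℝ) * g (2 * M) := by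
      funext M; simp [S, Finset.sum_range_succ]
    rw [this]
    simpa using heven.add hz
  exact tendsto_of_even_odd heven hodd

lemma abs_log_le {a b : ℝ} (ha : 0 < a) (hab : a ≤ b) :
    |Real.log b - Real.log a| ≤ (b - a) / a := by
  have hb : 0 < b := lt_of_lt_of_le ha hab
  rw [abs_of_nonneg (sub_nonneg.mpr (Real.log_le_log ha hab))]
  rw [← Real.log_div (ne_of_gt hb) (ne_of_gt ha)]
  have h1 := Real.log_le_sub_one_of_pos (show 0 < b / a by positivity)
  have h2 : b / a - 1 = (b - a) / a := by field_simp
  linarith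

lemma summable_aux : Summable fun k : ℕ => 1 / ((k : ℝ) + 1) ^ 2 := by
  have h : Summable fun n : ℕ => 1 / (n : ℝ) ^ 2 :=
    (Real.summable_one_div_nat_pow (p := 2)).mpr (by norm_num)
  have := (summable_nat_add_iff 1).mpr h
  refine this.congr fun k => ?_
  push_cast
  ring_nf

lemma log_two_mul_nat (m : ℕ) (hm : (0 : ℝ) < m) :
    Real.log (2 * (m : ℝ)) = Real.log 2 + Real.log m :=
  Real.log_mul (by norm_num) (ne_of_gt hm)

-- (2k+1)/(2k+2) = (4k+2)/(4k+4):  psl (2k+1) = psl (4k+2) + psl (4k+3)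
lemma P1 (k : ℕ) : psl (2 * k + 1) = psl (4 * k + 2) + psl (4 * k + 3) := by
  simp only [psl]
  push_cast
  have e1 : (4 : ℝ) * k + 2 = 2 * ((2 : ℝ) * k + 1) := by ring
  have e2 : (4 : ℝ) * k + 3 + 1 = 2 * ((2 : ℝ) * k + 1 + 1) := by ring
  rw [e1, e2, Real.log_mul (by norm_num) (by positivity),
    Real.log_mul (by norm_num) (by positivity)]
  ring

-- for m = k+1 ≥ 1 : psl (2m) + psl (2m+1) = psl m
lemma P2 (k : ℕ) : psl (2 * (k + 1)) + psl (2 * (k + 1) + 1) = psl (k + 1) := by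
  simp only [psl]
  push_cast
  have e1 : (2 : ℝ) * ((k : ℝ) + 1) = 2 * ((k : ℝ) + 1) := rfl
  have e2 : (2 : ℝ) * (k + 1) + 1 + 1 = 2 * ((k : ℝ) + 1 + 1) := by ring
  rw [e2, Real.log_mul (by norm_num) (by positivity),
    Real.log_mul (by norm_num) (by positivity)]
  ring

noncomputable def eg (n : ℕ) : ℝ := psl (n + 1)
noncomputable def wg (n : ℕ) : ℝ := psl (2 * n + 1)
noncomputable def cg (n : ℕ) : ℝ := psl n
noncomputable def dg (n : ℕ) : ℝ := psl (2 * n + 2)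

lemma pair_bound {x : ℝ} (hx : 0 ≤ x) :
    |Real.log (x + 1) - Real.log (x + 2) - (Real.log (x + 2) - Real.log (x + 3))|
      ≤ 1 / ((x + 1) * (x + 3)) := by
  have e1 : Real.log (x + 1) - Real.log (x + 2) - (Real.log (x + 2) - Real.log (x + 3))
      = Real.log ((x + 1) * (x + 3)) - Real.log ((x + 2) ^ 2) := by
    rw [Real.log_mul (by positivity) (by positivity), sq,
      Real.log_mul (by positivity) (by positivity)]
    ring
  rw [e1, abs_sub_comm]
  have h := abs_log_le (a := (x + 1) * (x + 3)) (b := (x + 2) ^ 2) (by positivity) (by nlinarith)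
  calc |Real.log ((x + 2) ^ 2) - Real.log ((x + 1) * (x + 3))|
      ≤ ((x + 2) ^ 2 - (x + 1) * (x + 3)) / ((x + 1) * (x + 3)) := h
    _ = 1 / ((x + 1) * (x + 3)) := by
        rw [show (x + 2) ^ 2 - (x + 1) * (x + 3) = 1 by ring]

lemma psl_abs_le (m : ℕ) : |psl (m + 1)| ≤ 1 / ((m : ℝ) + 1) := by
  simp only [psl]
  push_cast
  have h := abs_log_le (a := (m : ℝ) + 1) (b := (m : ℝ) + 1 + 1) (by positivity) (by linarith)
  rw [abs_sub_comm] at h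
  calc |Real.log ((m : ℝ) + 1) - Real.log ((m : ℝ) + 1 + 1)|
      ≤ ((m : ℝ) + 1 + 1 - ((m : ℝ) + 1)) / ((m : ℝ) + 1) := h
    _ = 1 / ((m : ℝ) + 1) := by ring

lemma conv_eg : ∃ L, Tendsto (S eg) atTop (𝓝 L) := by
  apply conv
  · apply squeeze_zero (fun n => abs_nonneg _) (g := fun n : ℕ => 1 / ((n : ℝ) + 1))
    · exact fun n => psl_abs_le n
    · exact tendsto_one_div_add_atTop_nhds_zero_nat
  · apply Summable.of_nonneg_of_le (fun k => abs_nonneg _) _ summable_aux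
    intro k
    simp only [eg, psl]
    push_cast
    have h := pair_bound (x := 2 * (k : ℝ)) (by positivity)
    have hb : (1 : ℝ) / ((2 * (k : ℝ) + 1) * (2 * (k : ℝ) + 3)) ≤ 1 / (((k : ℝ) + 1) ^ 2) := by
      rw [div_le_div_iff₀ (by positivity) (by positivity)]
      nlinarith [Nat.cast_nonneg (α := ℝ) k]
    have h2 := h.trans hb
    ring_nf at h2 ⊢
    exact h2

lemma conv_cg : ∃ L, Tendsto (S cg) atTop (𝓝 L) := by
  apply conv
  · apply squeeze_zero (fun n => abs_nonneg _) (g := fun n : ℕ => 1 / (n : ℝ))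
    · intro n
      match n with
      | 0 => simp [cg, psl]
      | (m + 1) =>
        have := psl_abs_le m
        simpa [cg] using this
    · exact tendsto_one_div_atTop_nhds_zero_nat
  · apply Summable.of_nonneg_of_le (fun k => abs_nonneg _) _ summable_aux
    intro k
    match k with
    | 0 =>
      simp only [cg, psl]
      norm_num [Real.log_zero, Real.log_one]
      have := Real.log_le_sub_one_of_pos (show (0 : ℝ) < 2 by norm_num)
      rw [abs_of_nonneg (Real.log_nonneg (by norm_num))]
      linarith
    | (m + 1) =>
      simp only [cg, psl]
      push_cast
      have h := pair_bound (x := 2 * (m : ℝ) + 1) (by positivity)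
      have hb : (1 : ℝ) / ((2 * (m : ℝ) + 1 + 1) * (2 * (m : ℝ) + 1 + 3))
          ≤ 1 / (((m : ℝ) + 1 + 1) ^ 2) := by
        rw [div_le_div_iff₀ (by positivity) (by positivity)]
        nlinarith [Nat.cast_nonneg (α := ℝ) m]
      have h2 := h.trans hb
      ring_nf at h2 ⊢
      exact h2

lemma J1 (M : ℕ) (hM : 1 ≤ M) :
    S cg (2 * M) = S cg M - 2 * S wg M - Real.log 2 := by
  rw [S_split]
  have key : ∀ k, (u k : ℝ) * (cg (2 * k) - cg (2 * k + 1))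
      = (u k : ℝ) * cg k - 2 * ((u k : ℝ) * wg k)
        + (if k = 0 then -Real.log 2 else 0) := by
    intro k
    match k with
    | 0 =>
      simp only [cg, wg, psl, u_zero, if_pos rfl]
      norm_num [Real.log_zero, Real.log_one]
      ring
    | (m + 1) =>
      have h := P2 m
      simp only [cg, wg, if_neg (Nat.succ_ne_zero m)]
      have e : cg (2 * (m + 1)) - cg (2 * (m + 1) + 1)
          = cg (m + 1) - 2 * psl (2 * (m + 1) + 1) := by
        simp only [cg]; linarith [P2 m]
      rw [show (2 * (m + 1) : ℕ) = 2 * (m + 1) from rfl]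
      simp only [cg] at e ⊢
      rw [show psl (2 * (m + 1)) - psl (2 * (m + 1) + 1)
          = psl (m + 1) - 2 * psl (2 * (m + 1) + 1) from e]
      ring
  rw [Finset.sum_congr rfl fun k _ => key k]
  rw [Finset.sum_add_distrib, Finset.sum_sub_distrib]
  have h1 : ∑ k ∈ Finset.range M, (if k = 0 then -Real.log 2 else 0) = -Real.log 2 := by
    rw [Finset.sum_ite_eq' (Finset.range M) 0 fun _ => -Real.log 2]
    simp [Finset.mem_range, hM]
    omega
  rw [h1, ← Finset.mul_sum]
  simp only [S]
  ring

noncomputable def la (n : ℕ) : ℝ := psl (4 * n + 3) + psl (4 * n + 4) + psl (2 * n + 2)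
noncomputable def lb (n : ℕ) : ℝ := psl (2 * n + 2) + psl (n + 1)

lemma K3 (M : ℕ) : S wg M - S eg (2 * M) = S dg M := by
  rw [S_split]
  have key : ∀ k, (u k : ℝ) * (eg (2 * k) - eg (2 * k + 1))
      = (u k : ℝ) * wg k - (u k : ℝ) * dg k := by
    intro k
    have e1 : eg (2 * k) = wg k := by simp only [eg, wg]
    have e2 : eg (2 * k + 1) = dg k := by
      simp only [eg, dg]
    rw [e1, e2]; ring
  rw [Finset.sum_congr rfl fun k _ => key k, Finset.sum_sub_distrib]
  simp only [S]
  ring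

lemma K1 (M : ℕ) : S wg M + S dg M - S dg (2 * M) = S la M := by
  rw [S_split]
  have key : ∀ k, (u k : ℝ) * wg k + (u k : ℝ) * dg k
      - (u k : ℝ) * (dg (2 * k) - dg (2 * k + 1)) = (u k : ℝ) * la k := by
    intro k
    have e1 : dg (2 * k) = psl (4 * k + 2) := by simp only [dg]; ring_nf
    have e2 : dg (2 * k + 1) = psl (4 * k + 4) := by simp only [dg]; ring_nf
    have e3 : la k = wg k + dg k - (psl (4 * k + 2) - psl (4 * k + 4)) := by
      simp only [la, wg, dg]
      linarith [P1 k]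
    rw [e1, e2, e3]; ring
  rw [show S wg M + S dg M - ∑ k ∈ Finset.range M, (u k : ℝ) * (dg (2 * k) - dg (2 * k + 1))
      = ∑ k ∈ Finset.range M, ((u k : ℝ) * wg k + (u k : ℝ) * dg k
        - (u k : ℝ) * (dg (2 * k) - dg (2 * k + 1))) by
    rw [Finset.sum_sub_distrib, Finset.sum_add_distrib]; simp only [S]]
  rw [Finset.sum_congr rfl fun k _ => key k]
  simp only [S]

lemma K2 (M : ℕ) : S dg M + S eg M = S lb M := by
  simp only [S, ← Finset.sum_add_distrib]
  refine Finset.sum_congr rfl fun n _ => ?_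
  simp only [lb, dg, eg]
  ring

lemma zpow_eq_exp {x : ℝ} (hx : 0 < x) (k : ℤ) :
    x ^ k = Real.exp (k * Real.log x) := by
  rw [← Real.rpow_intCast x k, Real.rpow_def_of_pos hx, mul_comm]

lemma log_a (n : ℕ) :
    Real.log (((4 * (n : ℝ) + 3) * (2 * (n : ℝ) + 2)) /
      ((4 * (n : ℝ) + 5) * (2 * (n : ℝ) + 3))) = la n := by
  have hn : (0 : ℝ) ≤ (n : ℝ) := Nat.cast_nonneg n
  simp only [la, psl]
  push_cast
  rw [Real.log_div (by positivity) (by positivity),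
    Real.log_mul (by positivity) (by positivity),
    Real.log_mul (by positivity) (by positivity)]
  ring_nf

lemma log_b (n : ℕ) :
    Real.log (((2 * (n : ℝ) + 2) * ((n : ℝ) + 1)) /
      ((2 * (n : ℝ) + 3) * ((n : ℝ) + 2))) = lb n := by
  have hn : (0 : ℝ) ≤ (n : ℝ) := Nat.cast_nonneg n
  simp only [lb, psl]
  push_cast
  rw [Real.log_div (by positivity) (by positivity),
    Real.log_mul (by positivity) (by positivity),
    Real.log_mul (by positivity) (by positivity)]
  ring_nf

lemma exp_val : Real.exp (-(Real.log 2) / 2) = 1 / Real.sqrt 2 := by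
  rw [show -(Real.log 2) / 2 = -(Real.log 2 / 2) by ring,
    ← Real.log_sqrt (by norm_num : (0 : ℝ) ≤ 2),
    Real.exp_neg, Real.exp_log (Real.sqrt_pos.mpr (by norm_num)), one_div]

/-- The partial products `∏_{n=0}^{N} [((4n+3)(2n+2)) / ((4n+5)(2n+3))]^{u_n}`
and `∏_{n=0}^{N} [((2n+2)(n+1)) / ((2n+3)(n+2))]^{u_n}` both converge to `1/√2`. -/
theorem stmt_19 :
    Tendsto (fun N : ℕ => ∏ n ∈ Finset.range (N + 1),
      (((4 * (n : ℝ) + 3) * (2 * (n : ℝ) + 2)) /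
        ((4 * (n : ℝ) + 5) * (2 * (n : ℝ) + 3))) ^ (u n)) atTop
      (𝓝 (1 / Real.sqrt 2)) ∧
    Tendsto (fun N : ℕ => ∏ n ∈ Finset.range (N + 1),
      (((2 * (n : ℝ) + 2) * ((n : ℝ) + 1)) /
        ((2 * (n : ℝ) + 3) * ((n : ℝ) + 2))) ^ (u n)) atTop
      (𝓝 (1 / Real.sqrt 2)) := by
  obtain ⟨ℓ, hE⟩ := conv_eg
  obtain ⟨c, hC⟩ := conv_cg
  have hC2 : Tendsto (fun M => S cg (2 * M)) atTop (𝓝 c) := hC.comp tendsto_two_mul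
  have hW : Tendsto (S wg) atTop (𝓝 (-(Real.log 2) / 2)) := by
    have ht : Tendsto (fun M => (S cg M - S cg (2 * M) - Real.log 2) / 2) atTop
        (𝓝 ((c - c - Real.log 2) / 2)) :=
      ((hC.sub hC2).sub tendsto_const_nhds).div_const 2
    have he : ∀ᶠ M in atTop, (S cg M - S cg (2 * M) - Real.log 2) / 2 = S wg M := by
      filter_upwards [eventually_ge_atTop 1] with M hM
      rw [J1 M hM]; ring
    have := ht.congr' he
    convert this using 2
    ring
  have hE2 : Tendsto (fun M => S eg (2 * M)) atTop (𝓝 ℓ) := hE.comp tendsto_two_mul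
  have hD : Tendsto (S dg) atTop (𝓝 (-(Real.log 2) / 2 - ℓ)) :=
    (hW.sub hE2).congr fun M => K3 M
  have hD2 : Tendsto (fun M => S dg (2 * M)) atTop (𝓝 (-(Real.log 2) / 2 - ℓ)) :=
    hD.comp tendsto_two_mul
  have hA : Tendsto (S la) atTop (𝓝 (-(Real.log 2) / 2)) := by
    have := ((hW.add hD).sub hD2).congr fun M => K1 M
    convert this using 2
    ring
  have hB : Tendsto (S lb) atTop (𝓝 (-(Real.log 2) / 2)) := by
    have := (hD.add hE).congr fun M => K2 M
    convert this using 2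
    ring
  have hshift : Tendsto (fun N : ℕ => N + 1) atTop atTop := tendsto_add_atTop_nat 1
  constructor
  · have h1 : Tendsto (fun N : ℕ => Real.exp (S la (N + 1))) atTop
        (𝓝 (Real.exp (-(Real.log 2) / 2))) :=
      (Real.continuous_exp.tendsto _).comp (hA.comp hshift)
    rw [exp_val] at h1
    refine h1.congr fun N => ?_
    rw [S, Real.exp_sum]
    refine Finset.prod_congr rfl fun n _ => ?_
    have hn : (0 : ℝ) ≤ (n : ℝ) := Nat.cast_nonneg n
    rw [← log_a n, zpow_eq_exp (by positivity)]
  · have h1 : Tendsto (fun N : ℕ => Real.exp (S lb (N + 1))) atTop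
        (𝓝 (Real.exp (-(Real.log 2) / 2))) :=
      (Real.continuous_exp.tendsto _).comp (hB.comp hshift)
    rw [exp_val] at h1
    refine h1.congr fun N => ?_
    rw [S, Real.exp_sum]
    refine Finset.prod_congr rfl fun n _ => ?_
    have hn : (0 : ℝ) ≤ (n : ℝ) := Nat.cast_nonneg n
    rw [← log_b n, zpow_eq_exp (by positivity)]
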